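/- Let α, β, γ > 0, and let (u,f) be a twice continuously differentiable solution on (0,∞) of u'' = (αβ/2) f² u + u(u²−1)/r² and f'' = −(2/r) f' + (β/r²) f u² + γ f(f²−1), with 0 < u(r) < 1 and 0 < f(r) < 1 for all r > 0, lim_{r→∞} u(r) = 0 and lim_{r→∞} f(r) = 1. Then for every ε ∈ (0,1) there exist constants C > 0 and R > 0 such that 1 − f(r) ≤ C·exp(−√2·min{√γ, √(αβ)}·(1−ε)·r) for all r ≥ R. -/

import Mathlib

open MeasureTheory Filter Set Topology

noncomputable section

/-- `(u,f)` is a (twice continuously differentiable) classical solution on `(0,∞)` of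
`u'' = (αβ/2) f² u + u(u²−1)/r²` and `f'' = −(2/r) f' + (β/r²) f u² + γ f(f²−1)`,
with first derivatives `u'`, `f'`. -/
def SolvesODE (α β γ : ℝ) (u u' f f' : ℝ → ℝ) : Prop :=
  ∀ r : ℝ, 0 < r →
    HasDerivAt u (u' r) r ∧ HasDerivAt f (f' r) r ∧
    HasDerivAt u' (α * β / 2 * f r ^ 2 * u r + u r * (u r ^ 2 - 1) / r ^ 2) r ∧
    HasDerivAt f' (-(2 / r) * f' r + β / r ^ 2 * f r * u r ^ 2
        + γ * f r * (f r ^ 2 - 1)) r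

/-- Derivative of `exp (-(m x))`. -/
lemma hasDerivAt_exp_neg_mul (m r : ℝ) :
    HasDerivAt (fun s : ℝ => Real.exp (-(m * s))) (-m * Real.exp (-(m * r))) r := by
  have h1 : HasDerivAt (fun s : ℝ => -(m * s)) (-m) r := by
    simpa [Pi.neg_def] using ((hasDerivAt_id r).const_mul m).neg
  simpa [Function.comp_def, mul_comm] using (Real.hasDerivAt_exp (-(m * r))).comp r h1

set_option maxHeartbeats 1000000 in
/-- Core comparison lemma: if `g'' ≥ k² g` on `[R,∞)` and `-A ≤ g ≤ B + r` there,
then `g r ≤ g R · exp(−k(r−R))` on `[R,∞)`. -/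
lemma decayA (k A B R : ℝ) (hk : 0 < k) (hA : 0 ≤ A) (hB : 0 ≤ B)
    (g g1 g2 : ℝ → ℝ)
    (hg : ∀ r, R ≤ r → HasDerivAt g (g1 r) r)
    (hg1 : ∀ r, R ≤ r → HasDerivAt g1 (g2 r) r)
    (hineq : ∀ r, R ≤ r → k ^ 2 * g r ≤ g2 r)
    (hup : ∀ r, R ≤ r → g r ≤ B + r)
    (hlo : ∀ r, R ≤ r → -A ≤ g r) :
    ∀ r, R ≤ r → g r ≤ g R * Real.exp (-(k * (r - R))) := by
  set φ : ℝ → ℝ := fun r => g1 r + k * g r with hφdef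
  have hφd : ∀ r, R ≤ r → HasDerivAt φ (g2 r + k * g1 r) r := fun r hr =>
    (hg1 r hr).add ((hg r hr).const_mul k)
  -- Step 1: φ ≤ 0 on [R, ∞)
  have hφ_le : ∀ r, R ≤ r → φ r ≤ 0 := by
    by_contra hcon
    push_neg at hcon
    obtain ⟨r1, hr1R, hr1pos⟩ := hcon
    set ψ : ℝ → ℝ := fun r => Real.exp (-(k * r)) * φ r with hψdef
    have hψd : ∀ r, R ≤ r → HasDerivAt ψ
        (Real.exp (-(k * r)) * (g2 r - k ^ 2 * g r)) r := by
      intro r hr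
      have he : HasDerivAt (fun r : ℝ => Real.exp (-(k * r))) (-k * Real.exp (-(k * r))) r :=
        hasDerivAt_exp_neg_mul k r
      have := he.mul (hφd r hr)
      refine this.congr_deriv ?_
      simp only [hφdef]
      ring
    have hψmono : MonotoneOn ψ (Ici r1) := by
      apply monotoneOn_of_deriv_nonneg (convex_Ici r1)
      · intro x hx
        exact ((hψd x (hr1R.trans hx)).continuousAt).continuousWithinAt
      · intro x hx
        rw [interior_Ici] at hx
        exact (hψd x (hr1R.trans hx.le)).differentiableAt.differentiableWithinAt
      · intro x hx
        rw [interior_Ici] at hx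
        rw [(hψd x (hr1R.trans hx.le)).deriv]
        have h1 := hineq x (hr1R.trans hx.le)
        have h2 := (Real.exp_pos (-(k * x))).le
        nlinarith
    set c : ℝ := Real.exp (-(k * r1)) * φ r1 with hcdef
    have hc : 0 < c := by positivity
    have hφge : ∀ r, r1 ≤ r → c * Real.exp (k * r) ≤ φ r := by
      intro r hr
      have h2 : c ≤ Real.exp (-(k * r)) * φ r :=
        hψmono (self_mem_Ici) (mem_Ici.mpr hr) hr
      have h3 : c * Real.exp (k * r) ≤ Real.exp (-(k * r)) * φ r * Real.exp (k * r) := by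
        have := Real.exp_pos (k * r)
        nlinarith
      calc c * Real.exp (k * r) ≤ Real.exp (-(k * r)) * φ r * Real.exp (k * r) := h3
        _ = φ r * (Real.exp (-(k * r)) * Real.exp (k * r)) := by ring
        _ = φ r := by rw [← Real.exp_add]; simp
    set P : ℝ := k * (B + 1) + A + B + 2 with hPdef
    have hP : 0 ≤ P := by positivity
    have htend : Tendsto (fun r : ℝ => c * Real.exp (k * r) / r) atTop atTop := by
      have t1 : Tendsto (fun x : ℝ => Real.exp x / x) atTop atTop := by
        simpa using Real.tendsto_exp_div_pow_atTop 1
      have t2 : Tendsto (fun r : ℝ => k * r) atTop atTop :=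
        Tendsto.const_mul_atTop hk tendsto_id
      have t3 : Tendsto (fun r : ℝ => Real.exp (k * r) / (k * r)) atTop atTop := t1.comp t2
      have t4 : Tendsto (fun r : ℝ => (c * k) * (Real.exp (k * r) / (k * r))) atTop atTop :=
        Tendsto.const_mul_atTop (by positivity) t3
      apply t4.congr'
      filter_upwards [eventually_gt_atTop (0:ℝ)] with r hr
      field_simp
    have hev : ∀ᶠ r in atTop, (k + 1) + P ≤ c * Real.exp (k * r) / r :=
      htend.eventually_ge_atTop _
    obtain ⟨r2, hr2⟩ := (hev.and (eventually_ge_atTop (max r1 1))).exists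
    obtain ⟨hr2a, hr2b⟩ := hr2
    have hr2r1 : r1 ≤ r2 := le_trans (le_max_left _ _) hr2b
    have hr21 : (1:ℝ) ≤ r2 := le_trans (le_max_right _ _) hr2b
    have hr2R : R ≤ r2 := hr1R.trans hr2r1
    have hkey : (k + 1) * r2 + P ≤ c * Real.exp (k * r2) := by
      have h0 : 0 < r2 := lt_of_lt_of_le one_pos hr21
      have h1 : ((k + 1) + P) ≤ c * Real.exp (k * r2) / r2 := hr2a
      rw [le_div_iff₀ h0] at h1
      nlinarith
    set M : ℝ := A + B + r2 + 2 with hMdef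
    have hderivlb : ∀ x ∈ Ioo r2 (r2 + 1), M ≤ g1 x := by
      intro x hx
      have hxr1 : r1 ≤ x := hr2r1.trans hx.1.le
      have hxR : R ≤ x := hr1R.trans hxr1
      have h1 : c * Real.exp (k * x) ≤ φ x := hφge x hxr1
      have h2 : g x ≤ B + x := hup x hxR
      have h3 : Real.exp (k * r2) ≤ Real.exp (k * x) :=
        Real.exp_le_exp.mpr (by nlinarith [hx.1.le])
      have h4 : c * Real.exp (k * r2) ≤ c * Real.exp (k * x) := by nlinarith
      have : g1 x = φ x - k * g x := by simp only [hφdef]; ring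
      rw [this]
      have hxub : x ≤ r2 + 1 := hx.2.le
      nlinarith
    have hcont : ContinuousOn g (Icc r2 (r2+1)) := by
      intro x hx
      exact ((hg x (hr2R.trans hx.1)).continuousAt).continuousWithinAt
    have hdiff : DifferentiableOn ℝ g (interior (Icc r2 (r2+1))) := by
      intro x hx
      rw [interior_Icc] at hx
      exact (hg x (hr2R.trans hx.1.le)).differentiableAt.differentiableWithinAt
    have hmv := Convex.mul_sub_le_image_sub_of_le_deriv (convex_Icc r2 (r2+1)) hcont hdiff
      (C := M) (by
        intro x hx
        rw [interior_Icc] at hx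
        rw [(hg x (hr2R.trans hx.1.le)).deriv]
        exact hderivlb x hx)
      r2 (by constructor <;> linarith) (r2+1) (by constructor <;> linarith) (by linarith)
    have h5 : g r2 ≥ -A := hlo r2 hr2R
    have h6 : g (r2+1) ≤ B + (r2+1) := hup (r2+1) (by linarith)
    simp only [add_sub_cancel_left, mul_one] at hmv
    simp only [hMdef] at hmv
    linarith
  -- Step 2: η = exp(k r) g decreasing
  have hηanti : AntitoneOn (fun r => Real.exp (k * r) * g r) (Ici R) := by
    have hηd : ∀ r, R ≤ r → HasDerivAt (fun r => Real.exp (k * r) * g r)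
        (Real.exp (k * r) * φ r) r := by
      intro r hr
      have he : HasDerivAt (fun r : ℝ => Real.exp (k * r)) (k * Real.exp (k * r)) r := by
        have h1 : HasDerivAt (fun r : ℝ => k * r) k r := by
          simpa using (hasDerivAt_id r).const_mul k
        simpa [Function.comp_def, mul_comm] using (Real.hasDerivAt_exp (k * r)).comp r h1
      have := he.mul (hg r hr)
      refine this.congr_deriv ?_
      simp only [hφdef]
      ring
    apply antitoneOn_of_deriv_nonpos (convex_Ici R)
    · intro x hx
      exact ((hηd x hx).continuousAt).continuousWithinAt
    · intro x hx
      rw [interior_Ici] at hx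
      exact (hηd x hx.le).differentiableAt.differentiableWithinAt
    · intro x hx
      rw [interior_Ici] at hx
      rw [(hηd x hx.le).deriv]
      have h1 := hφ_le x hx.le
      have h2 := Real.exp_pos (k * x)
      nlinarith
  intro r hr
  have h2 : Real.exp (k * r) * g r ≤ Real.exp (k * R) * g R :=
    hηanti (self_mem_Ici) (mem_Ici.mpr hr) hr
  have h3 : Real.exp (-(k * (r - R))) = Real.exp (k * R) / Real.exp (k * r) := by
    rw [← Real.exp_sub]; ring_nf
  rw [h3, ← sub_nonneg]
  have hepos := Real.exp_pos (k * r)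
  have heq : g R * (Real.exp (k*R) / Real.exp (k*r)) - g r
      = (Real.exp (k*R) * g R - Real.exp (k*r) * g r) / Real.exp (k*r) := by
    field_simp
  rw [heq]
  apply div_nonneg _ hepos.le
  linarith

set_option maxHeartbeats 1000000 in
/-- exponential convergence of `f` to `1` at infinity (case `γ > 0`):
`1 − f(r) ≤ C exp(−√2·min{√γ, √(αβ)}·(1−ε)·r)` for `r` large. -/
theorem f_exponential_decay (α β γ : ℝ) (hα : 0 < α) (hβ : 0 < β) (hγ : 0 < γ)
    (u u' f f' : ℝ → ℝ) (hsol : SolvesODE α β γ u u' f f')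
    (hu01 : ∀ r : ℝ, 0 < r → 0 < u r ∧ u r < 1)
    (hf01 : ∀ r : ℝ, 0 < r → 0 < f r ∧ f r < 1)
    (huinf : Tendsto u atTop (𝓝 0))
    (hfinf : Tendsto f atTop (𝓝 1)) :
    ∀ ε : ℝ, 0 < ε → ε < 1 →
      ∃ C > (0 : ℝ), ∃ R > (0 : ℝ), ∀ r : ℝ, R ≤ r →
        1 - f r ≤ C * Real.exp
          (-(Real.sqrt 2 * min (Real.sqrt γ) (Real.sqrt (α * β)) * (1 - ε) * r)) := by
  intro ε hε0 hε1
  have hαβ : 0 < α * β := mul_pos hα hβ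
  have hs2 : (0:ℝ) < Real.sqrt 2 := Real.sqrt_pos.mpr (by norm_num)
  have hsγ : 0 < Real.sqrt γ := Real.sqrt_pos.mpr hγ
  have hsαβ : 0 < Real.sqrt (α * β) := Real.sqrt_pos.mpr hαβ
  have hs2sq : Real.sqrt 2 ^ 2 = 2 := Real.sq_sqrt (by norm_num)
  have hsγsq : Real.sqrt γ ^ 2 = γ := Real.sq_sqrt hγ.le
  have hsαβsq : Real.sqrt (α * β) ^ 2 = α * β := Real.sq_sqrt hαβ.le
  set a : ℝ := Real.sqrt 2 * min (Real.sqrt γ) (Real.sqrt (α * β)) * (1 - ε) with ha_def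
  have hminpos : 0 < min (Real.sqrt γ) (Real.sqrt (α * β)) := lt_min hsγ hsαβ
  have hminαβ : min (Real.sqrt γ) (Real.sqrt (α * β)) ≤ Real.sqrt (α * β) := min_le_right _ _
  have hminγ : min (Real.sqrt γ) (Real.sqrt (α * β)) ≤ Real.sqrt γ := min_le_left _ _
  set c : ℝ := Real.sqrt (α * β / 2) * (1 - ε / 2) with hc_def
  have hab2 : (0:ℝ) < α * β / 2 := by linarith
  have hsab2 : 0 < Real.sqrt (α * β / 2) := Real.sqrt_pos.mpr hab2
  have hsab2sq : Real.sqrt (α * β / 2) ^ 2 = α * β / 2 := Real.sq_sqrt hab2.le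
  have hc : 0 < c := by nlinarith
  have hceq : c ^ 2 = (α * β / 2) * (1 - ε / 2) ^ 2 := by rw [hc_def, mul_pow, hsab2sq]
  have hcsq : c ^ 2 < α * β / 2 := by
    nlinarith [mul_pos (mul_pos hab2 hε0) (show (0:ℝ) < 1 - ε by linarith),
      mul_pos hab2 hε0]
  set m : ℝ := 2 * c with hm_def
  have hm : 0 < m := by rw [hm_def]; linarith
  have h2ab : m = Real.sqrt 2 * Real.sqrt (α * β) * (1 - ε / 2) := by
    have h4 : Real.sqrt 2 * Real.sqrt (α * β) = 2 * Real.sqrt (α * β / 2) := by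
      rw [← Real.sqrt_mul (by norm_num : (0:ℝ) ≤ 2),
        show (2:ℝ) * (α * β) = 2 ^ 2 * (α * β / 2) by ring,
        Real.sqrt_mul (by positivity : (0:ℝ) ≤ 2 ^ 2),
        Real.sqrt_sq (by norm_num : (0:ℝ) ≤ 2)]
    rw [hm_def, hc_def, h4]
    ring
  have ham : a ≤ m := by
    rw [h2ab, ha_def]
    have hA : Real.sqrt 2 * min (Real.sqrt γ) (Real.sqrt (α * β))
        ≤ Real.sqrt 2 * Real.sqrt (α * β) := mul_le_mul_of_nonneg_left hminαβ hs2.le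
    have h1ε : (0:ℝ) < 1 - ε := by linarith
    nlinarith [mul_le_mul_of_nonneg_right hA h1ε.le, mul_pos (mul_pos hs2 hsαβ) hε0]
  -- choose k with a ≤ k, k² < 2γ, k ≠ m
  have hkey : ∀ t : ℝ, 1 - ε ≤ t → t < 1 →
      0 < Real.sqrt 2 * Real.sqrt γ * t ∧ a ≤ Real.sqrt 2 * Real.sqrt γ * t ∧
      (Real.sqrt 2 * Real.sqrt γ * t) ^ 2 < 2 * γ := by
    intro t ht1 ht2
    have htpos : 0 < t := by linarith
    have hA : Real.sqrt 2 * min (Real.sqrt γ) (Real.sqrt (α * β))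
        ≤ Real.sqrt 2 * Real.sqrt γ := mul_le_mul_of_nonneg_left hminγ hs2.le
    have h1ε : (0:ℝ) < 1 - ε := by linarith
    refine ⟨by positivity, ?_, ?_⟩
    · rw [ha_def]
      linarith [mul_le_mul_of_nonneg_right hA h1ε.le,
        mul_le_mul_of_nonneg_left (show 1 - ε ≤ t from ht1) (mul_pos hs2 hsγ).le]
    · have he : (Real.sqrt 2 * Real.sqrt γ * t) ^ 2 = 2 * γ * t ^ 2 := by
        rw [mul_pow, mul_pow, hs2sq, hsγsq]
      rw [he]
      have ht2' : t ^ 2 < 1 := by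
        nlinarith [mul_pos (show (0:ℝ) < 1 - t by linarith) (show (0:ℝ) < 1 + t by linarith)]
      nlinarith [mul_pos hγ (show (0:ℝ) < 1 - t ^ 2 by linarith)]
  obtain ⟨k, hk0, hak, hk2γ, hkm⟩ :
      ∃ k : ℝ, 0 < k ∧ a ≤ k ∧ k ^ 2 < 2 * γ ∧ k ≠ m := by
    by_cases h : Real.sqrt 2 * Real.sqrt γ * (1 - ε / 2) = m
    · obtain ⟨p1, p2, p3⟩ := hkey (1 - ε / 3) (by linarith) (by linarith)
      refine ⟨Real.sqrt 2 * Real.sqrt γ * (1 - ε / 3), p1, p2, p3, ?_⟩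
      intro he
      rw [← h] at he
      have hq := mul_pos hs2 hsγ
      nlinarith
    · obtain ⟨p1, p2, p3⟩ := hkey (1 - ε / 2) (by linarith) (by linarith)
      exact ⟨Real.sqrt 2 * Real.sqrt γ * (1 - ε / 2), p1, p2, p3, h⟩
  have hmk2 : m ^ 2 - k ^ 2 ≠ 0 := by
    intro h0
    have h1 : (m - k) * (m + k) = 0 := by linear_combination h0
    rcases mul_eq_zero.mp h1 with h | h
    · exact hkm (by linarith)
    · linarith
  -- Step 1: exponential decay of u
  have t1 : Tendsto (fun r => f r ^ 2) atTop (𝓝 1) := by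
    simpa using hfinf.pow 2
  have t2 : Tendsto (fun r : ℝ => 1 / r ^ 2) atTop (𝓝 0) := by
    have hp : Tendsto (fun x : ℝ => x ^ 2) atTop atTop :=
      tendsto_pow_atTop (n := 2) (by norm_num)
    have := (tendsto_inv_atTop_zero (𝕜 := ℝ)).comp hp
    simpa [Function.comp_def, one_div] using this
  have t3 : Tendsto (fun r => α * β / 2 * f r ^ 2 - 1 / r ^ 2) atTop (𝓝 (α * β / 2)) := by
    have := (t1.const_mul (α * β / 2)).sub t2
    simpa using this
  have hev_u : ∀ᶠ r in atTop, c ^ 2 ≤ α * β / 2 * f r ^ 2 - 1 / r ^ 2 :=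
    Filter.Tendsto.eventually_const_le hcsq t3
  obtain ⟨Ru, hRu⟩ := eventually_atTop.mp (hev_u.and (eventually_ge_atTop (1:ℝ)))
  have hRu1 : (1:ℝ) ≤ Ru := (hRu Ru le_rfl).2
  have hudecay : ∀ r, Ru ≤ r → u r ≤ u Ru * Real.exp (-(c * (r - Ru))) := by
    apply decayA c 0 1 Ru hc le_rfl zero_le_one u u'
      (fun r => α * β / 2 * f r ^ 2 * u r + u r * (u r ^ 2 - 1) / r ^ 2)
    · intro r hr
      exact (hsol r (by linarith [(hRu r hr).2])).1
    · intro r hr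
      exact (hsol r (by linarith [(hRu r hr).2])).2.2.1
    · intro r hr
      have hr1 : (1:ℝ) ≤ r := (hRu r hr).2
      have hrpos : (0:ℝ) < r := by linarith
      have hur := hu01 r hrpos
      have h1 : c ^ 2 ≤ α * β / 2 * f r ^ 2 - 1 / r ^ 2 := (hRu r hr).1
      have hr2 : (0:ℝ) < r ^ 2 := by positivity
      have e1 : -u r ≤ u r * (u r ^ 2 - 1) := by nlinarith
      have e2 : (-u r) / r ^ 2 ≤ u r * (u r ^ 2 - 1) / r ^ 2 :=
        (div_le_div_iff_of_pos_right hr2).mpr e1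
      have e3 : c ^ 2 * u r ≤ (α * β / 2 * f r ^ 2 - 1 / r ^ 2) * u r :=
        mul_le_mul_of_nonneg_right h1 hur.1.le
      have e4 : (α * β / 2 * f r ^ 2 - 1 / r ^ 2) * u r
          = α * β / 2 * f r ^ 2 * u r + (-u r) / r ^ 2 := by ring
      linarith
    · intro r hr
      have hr1 : (1:ℝ) ≤ r := (hRu r hr).2
      have := (hu01 r (by linarith)).2
      linarith
    · intro r hr
      have hr1 : (1:ℝ) ≤ r := (hRu r hr).2
      have := (hu01 r (by linarith)).1
      linarith
  -- exponential bound for u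
  set Cu : ℝ := Real.exp (c * Ru) with hCu_def
  have hCu : 0 < Cu := Real.exp_pos _
  have hu_exp : ∀ r, Ru ≤ r → u r ≤ Cu * Real.exp (-(c * r)) := by
    intro r hr
    have h1 := hudecay r hr
    have h2 : u Ru ≤ 1 := ((hu01 Ru (by linarith)).2).le
    have h3 : Real.exp (-(c * (r - Ru))) = Cu * Real.exp (-(c * r)) := by
      rw [hCu_def, ← Real.exp_add]
      congr 1
      ring
    rw [h3] at h1
    have h4 : u Ru * (Cu * Real.exp (-(c * r))) ≤ 1 * (Cu * Real.exp (-(c * r))) :=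
      mul_le_mul_of_nonneg_right h2 (by positivity)
    linarith only [h1, h4]
  -- constants for the f equation
  set D : ℝ := β * Cu ^ 2 with hD_def
  have hD : 0 < D := by positivity
  set E : ℝ := D / (m ^ 2 - k ^ 2) with hE_def
  have hED : (m ^ 2 - k ^ 2) * E = D := by
    rw [hE_def]
    field_simp
  -- eventual condition for the f equation
  have t4 : Tendsto (fun r => γ * f r * (1 + f r)) atTop (𝓝 (2 * γ)) := by
    have := (hfinf.const_mul γ).mul ((tendsto_const_nhds (x := (1:ℝ))).add hfinf)
    convert this using 2
    ring
  have hev_f : ∀ᶠ r in atTop, k ^ 2 ≤ γ * f r * (1 + f r) :=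
    Filter.Tendsto.eventually_const_le hk2γ t4
  obtain ⟨R, hR⟩ := eventually_atTop.mp (hev_f.and (eventually_ge_atTop (max Ru 1)))
  have hRRu : Ru ≤ R := le_trans (le_max_left _ _) (hR R le_rfl).2
  have hR1 : (1:ℝ) ≤ R := le_trans (le_max_right _ _) (hR R le_rfl).2
  have hRpos : (0:ℝ) < R := by linarith
  have hrfacts : ∀ r : ℝ, R ≤ r → 0 < r ∧ 1 ≤ r ∧ Ru ≤ r := by
    intro r hr
    have h1 : (1:ℝ) ≤ r := le_trans (le_max_right _ _) (hR r hr).2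
    exact ⟨by linarith, h1, le_trans (le_max_left _ _) (hR r hr).2⟩
  -- the auxiliary function q and its derivatives
  set q : ℝ → ℝ := fun r => r * (1 - f r) + E * Real.exp (-(m * r)) with hq_def
  set q1 : ℝ → ℝ := fun r => (1 - f r) - r * f' r + E * (-m * Real.exp (-(m * r)))
    with hq1_def
  set q2 : ℝ → ℝ := fun r =>
      -(β / r * f r * u r ^ 2) - γ * r * f r * (f r ^ 2 - 1)
        + E * (m ^ 2 * Real.exp (-(m * r))) with hq2_def
  have hqd : ∀ r, R ≤ r → HasDerivAt q (q1 r) r := by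
    intro r hr
    obtain ⟨hrpos, -, -⟩ := hrfacts r hr
    have hf := (hsol r hrpos).2.1
    have hA : HasDerivAt (fun s => s * (1 - f s)) (1 * (1 - f r) + r * (0 - f' r)) r :=
      (hasDerivAt_id r).mul ((hasDerivAt_const r 1).sub hf)
    have hB : HasDerivAt (fun s => E * Real.exp (-(m * s)))
        (E * (-m * Real.exp (-(m * r)))) r := (hasDerivAt_exp_neg_mul m r).const_mul E
    have := hA.add hB
    refine this.congr_deriv ?_
    simp only [hq1_def]
    ring
  have hq1d : ∀ r, R ≤ r → HasDerivAt q1 (q2 r) r := by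
    intro r hr
    obtain ⟨hrpos, -, -⟩ := hrfacts r hr
    have hrne : r ≠ 0 := ne_of_gt hrpos
    have hf := (hsol r hrpos).2.1
    have hf2 := (hsol r hrpos).2.2.2
    have hA : HasDerivAt (fun s => 1 - f s) (-f' r) r := by
      simpa [Pi.sub_def] using ((hasDerivAt_const r (1:ℝ)).sub hf)
    have hB : HasDerivAt (fun s => s * f' s)
        (1 * f' r + r * (-(2 / r) * f' r + β / r ^ 2 * f r * u r ^ 2
          + γ * f r * (f r ^ 2 - 1))) r := (hasDerivAt_id r).mul hf2
    have hC : HasDerivAt (fun s => E * (-m * Real.exp (-(m * s))))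
        (E * (-m * (-m * Real.exp (-(m * r))))) r := by
      have := ((hasDerivAt_exp_neg_mul m r).const_mul (-m)).const_mul E
      simpa using this
    have := (hA.sub hB).add hC
    refine this.congr_deriv ?_
    simp only [hq2_def]
    field_simp
    ring
  -- differential inequality for q
  have hq_ineq : ∀ r, R ≤ r → k ^ 2 * q r ≤ q2 r := by
    intro r hr
    obtain ⟨hrpos, hr1, hrRu⟩ := hrfacts r hr
    have hfr := hf01 r hrpos
    have hur := hu01 r hrpos
    have hk2f : k ^ 2 ≤ γ * f r * (1 + f r) := (hR r hr).1
    set X : ℝ := Real.exp (-(m * r)) with hX_def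
    have hX0 : 0 < X := Real.exp_pos _
    -- u r ^ 2 ≤ Cu ^ 2 * X
    have hu2 : u r ^ 2 ≤ Cu ^ 2 * X := by
      have h1 := hu_exp r hrRu
      have h2 : Real.exp (-(c * r)) ^ 2 = X := by
        rw [hX_def, sq, ← Real.exp_add, hm_def]
        congr 1
        ring
      have h3 := (hu01 r hrpos).1
      have h4 : u r ^ 2 ≤ (Cu * Real.exp (-(c * r))) ^ 2 := by
        apply pow_le_pow_left₀ h3.le h1
      have h5 : (Cu * Real.exp (-(c * r))) ^ 2 = Cu ^ 2 * X := by
        rw [mul_pow, h2]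
      linarith only [h4, h5]
    -- piece 1
    have hp1 : k ^ 2 * (r * (1 - f r)) ≤ -(γ * r * f r * (f r ^ 2 - 1)) := by
      have he : -(γ * r * f r * (f r ^ 2 - 1))
          = (γ * f r * (1 + f r)) * (r * (1 - f r)) := by ring
      rw [he]
      have hge : 0 ≤ r * (1 - f r) := mul_nonneg hrpos.le (by linarith [hfr.2])
      exact mul_le_mul_of_nonneg_right hk2f hge
    -- piece 2
    have hp2 : β / r * f r * u r ^ 2 ≤ D * X := by
      have hbr : β / r ≤ β := by
        rw [div_le_iff₀ hrpos]
        linarith only [mul_le_mul_of_nonneg_left hr1 hβ.le]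
      have hbr0 : 0 < β / r := div_pos hβ hrpos
      have h1 : β / r * f r ≤ β := by
        have e := mul_le_mul_of_nonneg_left hfr.2.le hbr0.le
        linarith only [e, hbr]
      have h3 : β / r * f r * u r ^ 2 ≤ β * u r ^ 2 :=
        mul_le_mul_of_nonneg_right h1 (sq_nonneg _)
      have h4 : β * u r ^ 2 ≤ β * (Cu ^ 2 * X) :=
        mul_le_mul_of_nonneg_left hu2 hβ.le
      have h5 : D * X = β * (Cu ^ 2 * X) := by rw [hD_def]; ring
      linarith only [h3, h4, h5]
    -- combine
    have hp3 : E * (m ^ 2 * X) - k ^ 2 * (E * X) = D * X := by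
      linear_combination X * hED
    have e1 : k ^ 2 * (r * (1 - f r) + E * X)
        = k ^ 2 * (r * (1 - f r)) + k ^ 2 * (E * X) := by ring
    have hgoal : k ^ 2 * (r * (1 - f r) + E * X) ≤
        -(β / r * f r * u r ^ 2) - γ * r * f r * (f r ^ 2 - 1) + E * (m ^ 2 * X) := by
      linarith only [hp1, hp2, hp3, e1]
    simpa only [hq_def, hq2_def, hX_def] using hgoal
  -- bounds for q
  have hq_up : ∀ r, R ≤ r → q r ≤ |E| + r := by
    intro r hr
    obtain ⟨hrpos, hr1, -⟩ := hrfacts r hr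
    have hfr := hf01 r hrpos
    have hX1 : Real.exp (-(m * r)) ≤ 1 := by
      rw [Real.exp_le_one_iff]
      linarith only [mul_pos hm hrpos]
    have hX0 : 0 < Real.exp (-(m * r)) := Real.exp_pos _
    have h1 : r * (1 - f r) ≤ r := by
      linarith only [mul_pos hrpos hfr.1]
    have h2 : E * Real.exp (-(m * r)) ≤ |E| := by
      have h3 : E * Real.exp (-(m * r)) ≤ |E| * Real.exp (-(m * r)) :=
        mul_le_mul_of_nonneg_right (le_abs_self E) hX0.le
      have h4 : |E| * Real.exp (-(m * r)) ≤ |E| * 1 :=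
        mul_le_mul_of_nonneg_left hX1 (abs_nonneg E)
      linarith only [h3, h4]
    simp only [hq_def]
    linarith only [h1, h2]
  have hq_lo : ∀ r, R ≤ r → -|E| ≤ q r := by
    intro r hr
    obtain ⟨hrpos, hr1, -⟩ := hrfacts r hr
    have hfr := hf01 r hrpos
    have hX1 : Real.exp (-(m * r)) ≤ 1 := by
      rw [Real.exp_le_one_iff]
      linarith only [mul_pos hm hrpos]
    have hX0 : 0 < Real.exp (-(m * r)) := Real.exp_pos _
    have h1 : 0 ≤ r * (1 - f r) :=
      mul_nonneg hrpos.le (by linarith only [hfr.2])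
    have h2 : -|E| ≤ E * Real.exp (-(m * r)) := by
      have h3 : -|E| * Real.exp (-(m * r)) ≤ E * Real.exp (-(m * r)) :=
        mul_le_mul_of_nonneg_right (neg_abs_le E) hX0.le
      have h4 : -|E| * 1 ≤ -|E| * Real.exp (-(m * r)) :=
        mul_le_mul_of_nonpos_left hX1 (neg_nonpos_of_nonneg (abs_nonneg E))
      linarith only [h3, h4]
    simp only [hq_def]
    linarith only [h1, h2]
  have hqdecay := decayA k |E| |E| R hk0 (abs_nonneg E) (abs_nonneg E) q q1 q2
    hqd hq1d hq_ineq hq_up hq_lo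
  -- final assembly
  refine ⟨|q R| * Real.exp (k * R) + |E| + 1, by positivity, R, hRpos, ?_⟩
  intro r hr
  obtain ⟨hrpos, hr1, -⟩ := hrfacts r hr
  have hfr := hf01 r hrpos
  have hXa : 0 < Real.exp (-(a * r)) := Real.exp_pos _
  have hXk : Real.exp (-(k * r)) ≤ Real.exp (-(a * r)) := by
    apply Real.exp_le_exp.mpr
    have e := mul_le_mul_of_nonneg_right hak hrpos.le
    linarith only [e]
  have hXm : Real.exp (-(m * r)) ≤ Real.exp (-(a * r)) := by
    apply Real.exp_le_exp.mpr
    have e := mul_le_mul_of_nonneg_right ham hrpos.le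
    linarith only [e]
  have t0 : 1 - f r ≤ r * (1 - f r) := by
    have e := mul_le_mul_of_nonneg_left hr1
      (show (0:ℝ) ≤ 1 - f r by linarith only [hfr.2])
    linarith only [e]
  have t2 : q r ≤ q R * Real.exp (-(k * (r - R))) := hqdecay r hr
  have t3 : Real.exp (-(k * (r - R))) = Real.exp (k * R) * Real.exp (-(k * r)) := by
    rw [← Real.exp_add]
    congr 1
    ring
  have b1 : q R * Real.exp (-(k * (r - R))) ≤ |q R| * Real.exp (k * R) * Real.exp (-(a * r)) := by
    rw [t3]
    have hek := Real.exp_pos (k * R)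
    have hekr := Real.exp_pos (-(k * r))
    have s1 : q R * (Real.exp (k * R) * Real.exp (-(k * r)))
        ≤ |q R| * (Real.exp (k * R) * Real.exp (-(k * r))) :=
      mul_le_mul_of_nonneg_right (le_abs_self _) (by positivity)
    have s2 : |q R| * (Real.exp (k * R) * Real.exp (-(k * r)))
        ≤ |q R| * (Real.exp (k * R) * Real.exp (-(a * r))) :=
      mul_le_mul_of_nonneg_left
        (mul_le_mul_of_nonneg_left hXk hek.le) (abs_nonneg _)
    linarith only [s1, s2]
  have b2 : -E * Real.exp (-(m * r)) ≤ |E| * Real.exp (-(a * r)) := by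
    have s1 : -E * Real.exp (-(m * r)) ≤ |E| * Real.exp (-(m * r)) :=
      mul_le_mul_of_nonneg_right (neg_le_abs E) (Real.exp_pos _).le
    have s2 : |E| * Real.exp (-(m * r)) ≤ |E| * Real.exp (-(a * r)) :=
      mul_le_mul_of_nonneg_left hXm (abs_nonneg E)
    linarith only [s1, s2]
  have t1 : r * (1 - f r) = q r - E * Real.exp (-(m * r)) := by
    simp only [hq_def]
    ring
  have hgoal : 1 - f r ≤ (|q R| * Real.exp (k * R) + |E|) * Real.exp (-(a * r)) := by
    rw [t1] at t0
    linarith only [b1, b2, t2, t0]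
  have : (|q R| * Real.exp (k * R) + |E|) * Real.exp (-(a * r))
      ≤ (|q R| * Real.exp (k * R) + |E| + 1) * Real.exp (-(a * r)) := by
    linarith only [hXa.le]
  calc 1 - f r ≤ (|q R| * Real.exp (k * R) + |E|) * Real.exp (-(a * r)) := hgoal
    _ ≤ (|q R| * Real.exp (k * R) + |E| + 1) * Real.exp (-(a * r)) := this
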